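/- (Half-plane resolvent-distance estimates (ei.12), (beq.2), (ei.18)) Let ν ∈ ℝ with 0 < ν ≤ 1/120, let σ > 0, and let E, z ∈ ℂ satisfy Im z ≥ Im E − (sin ν / 2)·σ. Then for every r ∈ [σ, ∞): (i) (sin ν / 2)·σ ≤ | z − E − r·e^{−iν} |; (ii) sin ν · |z − E| ≤ 2·| z − E − r·e^{−iν} |; and consequently (iii) (sin ν / 4)·( (sin ν / 2)·σ + |z − E| ) ≤ | z − E − r·e^{−iν} |. -/

import Mathlib

noncomputable section

set_option maxHeartbeats 1000000 in
/-- Half-plane resolvent-distance estimates (ei.12), (beq.2), (ei.18). -/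
theorem halfplane_estimates
    (ν : ℝ) (hν0 : 0 < ν) (hν : ν ≤ 1/120)
    (σ : ℝ) (hσ : 0 < σ)
    (E z : ℂ) (hz : E.im - Real.sin ν / 2 * σ ≤ z.im)
    (r : ℝ) (hr : σ ≤ r) :
    Real.sin ν / 2 * σ ≤ ‖z - E - (r : ℂ) * Complex.exp (-Complex.I * ν)‖ ∧
    Real.sin ν * ‖z - E‖
      ≤ 2 * ‖z - E - (r : ℂ) * Complex.exp (-Complex.I * ν)‖ ∧
    Real.sin ν / 4 * (Real.sin ν / 2 * σ + ‖z - E‖)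
      ≤ ‖z - E - (r : ℂ) * Complex.exp (-Complex.I * ν)‖ := by
  have hνπ : ν < Real.pi := by linarith [Real.pi_gt_three]
  have hs : 0 < Real.sin ν := Real.sin_pos_of_pos_of_lt_pi hν0 hνπ
  have hs1 : Real.sin ν ≤ 1 := Real.sin_le_one ν
  have hr0 : 0 < r := lt_of_lt_of_le hσ hr
  set s := Real.sin ν with hsd
  set c := Real.cos ν with hcd
  have hcs : c ^ 2 + s ^ 2 = 1 := by
    rw [hsd, hcd]; exact Real.cos_sq_add_sin_sq ν
  set D : ℂ := z - E - (r : ℂ) * Complex.exp (-Complex.I * ν) with hDd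
  have hwre : (-Complex.I * (ν : ℂ)).re = 0 := by simp
  have hwim : (-Complex.I * (ν : ℂ)).im = -ν := by simp
  have hexpre : (Complex.exp (-Complex.I * (ν : ℂ))).re = c := by
    rw [Complex.exp_re, hwre, hwim, Real.exp_zero, Real.cos_neg, one_mul, hcd]
  have hexpim : (Complex.exp (-Complex.I * (ν : ℂ))).im = -s := by
    rw [Complex.exp_im, hwre, hwim, Real.exp_zero, Real.sin_neg, one_mul, hsd]
  have hDre : D.re = (z.re - E.re) - r * c := by
    rw [hDd, Complex.sub_re, Complex.sub_re, Complex.mul_re, Complex.ofReal_re,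
      Complex.ofReal_im, hexpre, hexpim]; ring
  have hDim : D.im = (z.im - E.im) + r * s := by
    rw [hDd, Complex.sub_im, Complex.sub_im, Complex.mul_im, Complex.ofReal_re,
      Complex.ofReal_im, hexpre, hexpim]; ring
  set x : ℝ := z.re - E.re with hxd
  set y : ℝ := z.im - E.im with hyd
  have hy : -(s / 2 * σ) ≤ y := by rw [hyd]; linarith
  -- (i)
  have hi : s / 2 * σ ≤ ‖D‖ := by
    have h1 : s / 2 * σ ≤ D.im := by rw [hDim]; nlinarith
    exact h1.trans (Complex.im_le_norm D)
  -- squared norms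
  have habsD : (‖D‖) ^ 2 = ((x - r * c) ^ 2 + (y + r * s) ^ 2) := by
    rw [Complex.sq_norm, Complex.normSq_apply, hDre, hDim, hxd, hyd]; ring
  have habsw : (‖z - E‖) ^ 2 = x ^ 2 + y ^ 2 := by
    rw [Complex.sq_norm, Complex.normSq_apply, hxd, hyd]
    simp [Complex.sub_re, Complex.sub_im]; ring
  have h4 : 0 < 4 - s ^ 2 := by nlinarith
  -- (ii)
  have hii : s * ‖z - E‖ ≤ 2 * ‖D‖ := by
    have h5 : 2 * s * r ≤ (4 - s ^ 2) * y + 4 * s * r := by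
      have h5a : (4 - s ^ 2) * (-(s / 2 * σ)) ≤ (4 - s ^ 2) * y :=
        mul_le_mul_of_nonneg_left hy h4.le
      have h5b : s * σ ≤ s * r := mul_le_mul_of_nonneg_left hr hs.le
      have h5c : 0 ≤ s ^ 2 * (s * σ) := by positivity
      nlinarith [h5a, h5b, h5c]
    have h6 : (2 * s * r) ^ 2 ≤ ((4 - s ^ 2) * y + 4 * s * r) ^ 2 := by
      have h0 : (0:ℝ) ≤ 2 * s * r := by positivity
      nlinarith
    have key : (4 - s ^ 2) *
        (4 * ((x - r * c) ^ 2 + (y + r * s) ^ 2) - s ^ 2 * (x ^ 2 + y ^ 2))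
        = ((4 - s ^ 2) * x - 4 * c * r) ^ 2
          + (((4 - s ^ 2) * y + 4 * s * r) ^ 2 - (2 * s * r) ^ 2) := by
      linear_combination (-4 * s ^ 2 * r ^ 2) * hcs
    have hsq : (s * ‖z - E‖) ^ 2 ≤ (2 * ‖D‖) ^ 2 := by
      have e1 : (s * ‖z - E‖) ^ 2 = s ^ 2 * (x ^ 2 + y ^ 2) := by
        rw [mul_pow, habsw]
      have e2 : (2 * ‖D‖) ^ 2
          = 4 * ((x - r * c) ^ 2 + (y + r * s) ^ 2) := by
        rw [mul_pow, habsD]; ring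
      rw [e1, e2]
      nlinarith [key, h6, sq_nonneg ((4 - s ^ 2) * x - 4 * c * r), h4]
    have h1 : 0 ≤ s * ‖z - E‖ := by positivity
    have h2 : 0 ≤ 2 * ‖D‖ := by positivity
    have := Real.sqrt_le_sqrt hsq
    rwa [Real.sqrt_sq h1, Real.sqrt_sq h2] at this
  refine ⟨hi, hii, ?_⟩
  have hDnn : 0 ≤ ‖D‖ := norm_nonneg D
  have hwnn : 0 ≤ ‖z - E‖ := norm_nonneg _
  have t1 : s / 4 * (s / 2 * σ) ≤ s / 4 * ‖D‖ :=
    mul_le_mul_of_nonneg_left hi (by linarith)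
  have t2 : s / 4 * ‖D‖ ≤ 1 / 4 * ‖D‖ := by nlinarith
  have t3 : s / 4 * ‖z - E‖ ≤ 1 / 2 * ‖D‖ := by linarith
  linarith [t1, t2, t3]

end
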